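/- Let 1 ≤ p < ∞ and let φ ∈ G_p. Fix m₀ ∈ ℤ and N₀ ∈ ℕ, and let ξ^{m₀,N₀} be the characteristic sequence of S_{m₀,N₀} (equal to 1 on S_{m₀,N₀} and 0 elsewhere). Then there exists C > 0, independent of m₀ and N₀, such that 1/(2 φ(2N₀+1)) ≤ ‖ξ^{m₀,N₀}‖_{wℓ^p_φ} ≤ C/φ(2N₀+1). -/

import Mathlib

open scoped ENNReal NNReal BigOperators

/-- The discrete "ball" `S_{m,N} = {m-N, …, m+N}` as a finite set of integers. -/
noncomputable def S (m : ℤ) (N : ℕ) : Finset ℤ := Finset.Icc (m - N) (m + N)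

open Classical in
/-- The cardinality of `{k ∈ S_{m,N} : |x_k| > γ}`. -/
noncomputable def weakCard (x : ℤ → ℂ) (m : ℤ) (N : ℕ) (γ : ℝ≥0) : ℕ :=
  ((S m N).filter (fun k => γ < ‖x k‖₊)).card

/-- The generalized weak type discrete Morrey norm `‖x‖_{wℓ^p_φ}`. -/
noncomputable def wgMorreyNorm (p : ℝ) (φ : ℕ → ℝ) (x : ℤ → ℂ) : ℝ≥0∞ :=
  ⨆ (m : ℤ) (N : ℕ) (γ : ℝ≥0) (_ : 0 < γ),
    (ENNReal.ofReal (φ (2 * N + 1)))⁻¹ * (γ : ℝ≥0∞) *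
      ((weakCard x m N γ : ℝ≥0∞) / (2 * (N : ℝ≥0∞) + 1)) ^ (1 / p)

lemma card_S (m : ℤ) (N : ℕ) : (S m N).card = 2 * N + 1 := by
  simp only [S, Int.card_Icc]
  omega

theorem stmt16 (p : ℝ) (hp : 1 ≤ p) (φ : ℕ → ℝ)
    (hφpos : ∀ N : ℕ, 0 < φ (2 * N + 1))
    (hdec : ∃ C : ℝ, 0 < C ∧ ∀ M N : ℕ, M ≤ N → C * φ (2 * N + 1) ≤ φ (2 * M + 1))
    (hinc : ∃ C : ℝ, 0 < C ∧ ∀ M N : ℕ, M ≤ N →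
      (2 * (M : ℝ) + 1) ^ (1 / p) * φ (2 * M + 1) ≤
        C * ((2 * (N : ℝ) + 1) ^ (1 / p) * φ (2 * N + 1)))
 :
    ∃ C : ℝ, 0 < C ∧ ∀ (m₀ : ℤ) (N₀ : ℕ),
      ENNReal.ofReal (1 / (2 * φ (2 * N₀ + 1))) ≤
          wgMorreyNorm p φ (fun k => if k ∈ S m₀ N₀ then (1 : ℂ) else 0) ∧
        wgMorreyNorm p φ (fun k => if k ∈ S m₀ N₀ then (1 : ℂ) else 0) ≤
          ENNReal.ofReal (C / φ (2 * N₀ + 1)) := by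
  obtain ⟨C₁, hC₁, hdec⟩ := hdec
  obtain ⟨C₂, hC₂, hinc⟩ := hinc
  have hp0 : 0 < p := lt_of_lt_of_le one_pos hp
  have hip : 0 < 1 / p := by positivity
  refine ⟨max (1 / C₁) C₂, lt_max_of_lt_left (by positivity), fun m₀ N₀ => ?_⟩
  set ξ : ℤ → ℂ := fun k => if k ∈ S m₀ N₀ then (1 : ℂ) else 0 with hξ
  have hnorm : ∀ k, ‖ξ k‖₊ = if k ∈ S m₀ N₀ then 1 else 0 := by
    intro k
    simp only [hξ]
    split <;> simp
  constructor
  · -- lower bound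
    have hwc : weakCard ξ m₀ N₀ (1/2) = 2 * N₀ + 1 := by
      rw [weakCard, Finset.filter_true_of_mem, card_S]
      intro k hk
      rw [hnorm k, if_pos hk]
      exact_mod_cast (by norm_num : (1/2 : ℝ) < 1)
    refine le_trans ?_ (le_iSup_of_le m₀ (le_iSup_of_le N₀ (le_iSup_of_le (1/2 : ℝ≥0)
      (le_iSup_of_le (by norm_num) le_rfl))))
    rw [hwc]
    have hcast : (2 * (N₀ : ℝ≥0∞) + 1) = ((2 * N₀ + 1 : ℕ) : ℝ≥0∞) := by push_cast; ring
    rw [hcast, ENNReal.div_self (Nat.cast_ne_zero.2 (by omega)) (ENNReal.natCast_ne_top _),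
      ENNReal.one_rpow, mul_one]
    have h2 : ((1/2 : ℝ≥0) : ℝ≥0∞) = ENNReal.ofReal (1/2) := by
      rw [show (1/2:ℝ) = ((1/2:ℝ≥0):ℝ) by norm_num, ENNReal.ofReal_coe_nnreal]
    rw [h2, ← ENNReal.ofReal_inv_of_pos (hφpos N₀),
      ← ENNReal.ofReal_mul (inv_nonneg.2 (hφpos N₀).le)]
    apply ENNReal.ofReal_le_ofReal
    apply le_of_eq
    rw [one_div, mul_inv, one_div]
    ring
  · -- upper bound
    rw [wgMorreyNorm]
    refine iSup_le fun m => iSup_le fun N => iSup_le fun γ => iSup_le fun hγ => ?_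
    by_cases h1 : (1 : ℝ≥0) ≤ γ
    · have hz : weakCard ξ m N γ = 0 := by
        rw [weakCard, Finset.card_eq_zero, Finset.filter_eq_empty_iff]
        intro k _
        rw [hnorm k]
        split
        · exact not_lt.2 h1
        · exact not_lt.2 (zero_le : (0:ℝ≥0) ≤ γ)
      rw [hz]
      simp only [Nat.cast_zero, ENNReal.zero_div, ENNReal.zero_rpow_of_pos hip, mul_zero]
      exact zero_le
    · push_neg at h1
      have hwc : weakCard ξ m N γ = ((S m N) ∩ (S m₀ N₀)).card := by
        rw [weakCard]
        congr 1
        ext k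
        simp only [Finset.mem_filter, Finset.mem_inter, hnorm k]
        constructor
        · rintro ⟨hk, hlt⟩
          refine ⟨hk, ?_⟩
          by_contra h
          rw [if_neg h] at hlt
          exact absurd hlt (not_lt.2 (zero_le : (0:ℝ≥0) ≤ γ))
        · rintro ⟨hk, hk'⟩
          exact ⟨hk, by rw [if_pos hk']; exact h1⟩
      set wc := weakCard ξ m N γ with hwcdef
      have hwc1 : wc ≤ 2 * N + 1 := by
        rw [hwc, ← card_S m N]
        exact Finset.card_le_card (Finset.inter_subset_left)
      have hwc2 : wc ≤ 2 * N₀ + 1 := by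
        rw [hwc, ← card_S m₀ N₀]
        exact Finset.card_le_card (Finset.inter_subset_right)
      -- rewrite the term as ofReal of a real expression
      have hdenom : (0:ℝ) < 2 * (N:ℝ) + 1 := by positivity
      have hterm : ((wc : ℝ≥0∞) / (2 * (N : ℝ≥0∞) + 1)) ^ (1/p)
          = ENNReal.ofReal (((wc : ℝ) / (2 * (N:ℝ) + 1)) ^ (1/p)) := by
        rw [← ENNReal.ofReal_rpow_of_nonneg (by positivity) hip.le]
        congr 1
        rw [ENNReal.ofReal_div_of_pos hdenom, ENNReal.ofReal_natCast,
          show ((2:ℝ) * (N:ℝ) + 1) = ((2*N+1 : ℕ) : ℝ) by push_cast; ring,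
          ENNReal.ofReal_natCast]
        push_cast
        ring
      have hγ1 : (γ : ℝ≥0∞) ≤ 1 := by exact_mod_cast h1.le
      calc (ENNReal.ofReal (φ (2 * N + 1)))⁻¹ * (γ : ℝ≥0∞) *
            ((wc : ℝ≥0∞) / (2 * (N : ℝ≥0∞) + 1)) ^ (1/p)
          ≤ (ENNReal.ofReal (φ (2 * N + 1)))⁻¹ * 1 *
            ((wc : ℝ≥0∞) / (2 * (N : ℝ≥0∞) + 1)) ^ (1/p) := by gcongr
        _ = ENNReal.ofReal ((φ (2 * N + 1))⁻¹ * ((wc : ℝ) / (2 * (N:ℝ) + 1)) ^ (1/p)) := by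
            rw [mul_one, hterm, ← ENNReal.ofReal_inv_of_pos (hφpos N),
              ← ENNReal.ofReal_mul (inv_nonneg.2 (hφpos N).le)]
        _ ≤ ENNReal.ofReal (max (1 / C₁) C₂ / φ (2 * N₀ + 1)) := by
            apply ENNReal.ofReal_le_ofReal
            have hφN := hφpos N
            have hφN₀ := hφpos N₀
            rcases le_total N N₀ with hNN | hNN
            · -- small N : ratio ≤ 1
              have hr1 : ((wc : ℝ) / (2 * (N:ℝ) + 1)) ^ (1/p) ≤ 1 := by
                apply Real.rpow_le_one (by positivity) _ hip.le
                rw [div_le_one hdenom]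
                exact_mod_cast hwc1
              calc (φ (2 * N + 1))⁻¹ * ((wc : ℝ) / (2 * (N:ℝ) + 1)) ^ (1/p)
                  ≤ (φ (2 * N + 1))⁻¹ * 1 :=
                    mul_le_mul_of_nonneg_left hr1 (inv_nonneg.2 hφN.le)
                _ = (φ (2 * N + 1))⁻¹ := mul_one _
                _ ≤ (C₁ * φ (2 * N₀ + 1))⁻¹ := by
                    exact inv_anti₀ (by positivity) (hdec N N₀ hNN)
                _ = (1 / C₁) / φ (2 * N₀ + 1) := by
                    rw [mul_inv, one_div, div_eq_mul_inv]
                _ ≤ max (1 / C₁) C₂ / φ (2 * N₀ + 1) := by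
                    gcongr
                    exact le_max_left _ _
            · -- large N
              have hr : ((wc : ℝ) / (2 * (N:ℝ) + 1)) ^ (1/p)
                  ≤ ((2 * (N₀:ℝ) + 1) / (2 * (N:ℝ) + 1)) ^ (1/p) := by
                apply Real.rpow_le_rpow (by positivity) _ hip.le
                gcongr
                exact_mod_cast hwc2
              have hd0 : (0:ℝ) < 2 * (N₀:ℝ) + 1 := by positivity
              have hb : (0:ℝ) < (2 * (N:ℝ) + 1) ^ (1/p) := Real.rpow_pos_of_pos hdenom _
              have ha : (0:ℝ) < (2 * (N₀:ℝ) + 1) ^ (1/p) := Real.rpow_pos_of_pos hd0 _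
              calc (φ (2 * N + 1))⁻¹ * ((wc : ℝ) / (2 * (N:ℝ) + 1)) ^ (1/p)
                  ≤ (φ (2 * N + 1))⁻¹ * ((2 * (N₀:ℝ) + 1) / (2 * (N:ℝ) + 1)) ^ (1/p) :=
                    mul_le_mul_of_nonneg_left hr (inv_nonneg.2 hφN.le)
                _ = (2 * (N₀:ℝ) + 1) ^ (1/p) / ((2 * (N:ℝ) + 1) ^ (1/p) * φ (2 * N + 1)) := by
                    rw [Real.div_rpow hd0.le hdenom.le, inv_mul_eq_div, div_div]
                _ ≤ C₂ / φ (2 * N₀ + 1) := by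
                    rw [div_le_div_iff₀ (by positivity) hφN₀]
                    exact hinc N₀ N hNN
                _ ≤ max (1 / C₁) C₂ / φ (2 * N₀ + 1) := by
                    gcongr
                    exact le_max_right _ _
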